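/- Let n ≥ 2 be an integer. For every real polynomial f in the linear span of the products T_{k₁}(t₁)T_{k₂}(t₂)T_{k₃}(t₃) of Chebyshev polynomials of the first kind with k₁,k₂,k₃ ≥ 0 and k_ν + k_μ ≤ 2n−1 for all 1 ≤ ν < μ ≤ 3 — in particular, for every real polynomial f in three variables of total degree at most 2n−1 — one has (1/π³) · ∫_{[−1,1]³} f(t) · Π_{i=1}^3 (1−t_i²)^{−1/2} dt = (1/(2n³)) · Σ_{k ∈ Ξ_n} λ_k · f(cos(k₁π/n), cos(k₂π/n), cos(k₃π/n)). -/

import Mathlib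

open MeasureTheory Complex

attribute [local instance] Classical.propDecidable

/-- The exponential e_k(x) = exp(2 pi i (k1 x1 + k2 x2 + k3 x3)). -/
noncomputable def e3 (k : ℤ × ℤ × ℤ) (x : ℝ × ℝ × ℝ) : ℂ :=
  Complex.exp (2 * Real.pi * Complex.I *
    ((k.1 : ℂ) * x.1 + (k.2.1 : ℂ) * x.2.1 + (k.2.2 : ℂ) * x.2.2))

/-- The point k/(2n) in three-space. -/
noncomputable def pt3 (n : ℕ) (k : ℤ × ℤ × ℤ) : ℝ × ℝ × ℝ :=
  ((k.1 : ℝ) / (2 * n), (k.2.1 : ℝ) / (2 * n), (k.2.2 : ℝ) / (2 * n))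

/-- The cube of integer points with coordinates in [-m, m]. -/
noncomputable def box3 (m : ℕ) : Finset (ℤ × ℤ × ℤ) :=
  Finset.Icc (-(m : ℤ), -(m : ℤ), -(m : ℤ)) ((m : ℤ), (m : ℤ), (m : ℤ))

/-- Ξ_n = {k : 0 ≤ k_i ≤ n, k1 ≡ k2 ≡ k3 (mod 2)}. -/
noncomputable def Xi3 (n : ℕ) : Finset (ℤ × ℤ × ℤ) :=
  (Finset.Icc ((0 : ℤ), (0 : ℤ), (0 : ℤ)) ((n : ℤ), (n : ℤ), (n : ℤ))).filter
    fun k => k.1 % 2 = k.2.1 % 2 ∧ k.2.1 % 2 = k.2.2 % 2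

/-- The cubature weight λ_k = 2^{3-m}, m = #{i : k_i ∈ {0, n}}. -/
noncomputable def lam3 (n : ℕ) (k : ℤ × ℤ × ℤ) : ℝ :=
  2 ^ (3 - ((if k.1 = 0 ∨ k.1 = (n : ℤ) then 1 else 0)
    + (if k.2.1 = 0 ∨ k.2.1 = (n : ℤ) then 1 else 0)
    + (if k.2.2 = 0 ∨ k.2.2 = (n : ℤ) then 1 else 0) : ℕ))

/-- Products of Chebyshev polynomials of the first kind with pairwise degree sums at most N. -/
def chebProducts (N : ℕ) : Set (ℝ × ℝ × ℝ → ℝ) :=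
  { g | ∃ k : ℕ × ℕ × ℕ, k.1 + k.2.1 ≤ N ∧ k.1 + k.2.2 ≤ N ∧ k.2.1 + k.2.2 ≤ N ∧
      g = fun t => (Polynomial.Chebyshev.T ℝ (k.1 : ℤ)).eval t.1 *
        (Polynomial.Chebyshev.T ℝ (k.2.1 : ℤ)).eval t.2.1 *
        (Polynomial.Chebyshev.T ℝ (k.2.2 : ℤ)).eval t.2.2 }

section Aux1
open Real

lemma cos_image_Ioo : Real.cos '' Set.Ioo 0 π = Set.Ioo (-1 : ℝ) 1 := by
  apply Set.eq_of_subset_of_subset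
  · rintro y ⟨x, ⟨hx0, hxπ⟩, rfl⟩
    constructor
    · have := Real.cos_lt_cos_of_nonneg_of_le_pi (by positivity) le_rfl hxπ
      simpa using this
    · have := Real.cos_lt_cos_of_nonneg_of_le_pi le_rfl hxπ.le hx0
      simpa using this
  · rintro y ⟨h1, h2⟩
    refine ⟨Real.arccos y, ⟨Real.arccos_pos.2 h2, ?_⟩, Real.cos_arccos h1.le h2.le⟩
    refine lt_of_le_of_ne (Real.arccos_le_pi y) fun h => ?_
    rw [Real.arccos_eq_pi] at h; linarith

lemma cheb_int (j : ℕ) :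
    ∫ t in Set.Icc (-1:ℝ) 1, (Polynomial.Chebyshev.T ℝ (j:ℤ)).eval t * (Real.sqrt (1 - t^2))⁻¹
      = if j = 0 then π else 0 := by
  rw [MeasureTheory.integral_Icc_eq_integral_Ioo, ← cos_image_Ioo,
    integral_image_eq_integral_abs_deriv_smul measurableSet_Ioo
      (fun x _ => (Real.hasDerivAt_cos x).hasDerivWithinAt) (Real.injOn_cos.mono (by
        intro x hx; exact ⟨hx.1.le, hx.2.le⟩))]
  have h1 : ∀ x ∈ Set.Ioo (0:ℝ) π,
      |(-Real.sin x)| • ((Polynomial.Chebyshev.T ℝ (j:ℤ)).eval (Real.cos x) *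
        (Real.sqrt (1 - Real.cos x ^ 2))⁻¹) = Real.cos (j * x) := by
    intro x hx
    have hs : 0 < Real.sin x := Real.sin_pos_of_pos_of_lt_pi hx.1 hx.2
    have h2 : (1 : ℝ) - Real.cos x ^ 2 = Real.sin x ^ 2 := by
      have := Real.sin_sq_add_cos_sq x; linarith
    rw [h2, Real.sqrt_sq hs.le, abs_neg, abs_of_pos hs, Polynomial.Chebyshev.T_real_cos,
      smul_eq_mul]
    push_cast
    field_simp
  rw [MeasureTheory.setIntegral_congr_fun measurableSet_Ioo h1]
  rw [← MeasureTheory.integral_Ioc_eq_integral_Ioo, ← intervalIntegral.integral_of_le Real.pi_pos.le]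
  rcases Nat.eq_zero_or_pos j with rfl | hj
  · simp [Real.pi_pos.le]
  · have hj' : (j:ℝ) ≠ 0 := by positivity
    rw [if_neg hj.ne']
    have : ∫ x in (0:ℝ)..π, Real.cos (j * x) = Real.sin (j * π) / j - Real.sin (j * 0) / j := by
      apply intervalIntegral.integral_eq_sub_of_hasDerivAt (f := fun x => Real.sin ((j:ℝ)*x)/(j:ℝ))
      · intro x _
        simpa [mul_comm, mul_div_assoc, mul_div_cancel_left₀ _ hj'] using
          ((Real.hasDerivAt_sin (j * x)).comp x ((hasDerivAt_id x).const_mul (j:ℝ))).div_const (j:ℝ)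
      · exact (Real.continuous_cos.comp (continuous_const.mul continuous_id)).intervalIntegrable 0 π
    rw [this, Real.sin_nat_mul_pi]
    simp

noncomputable def cw (j : ℕ) : ℝ → ℝ := fun t =>
  (Polynomial.Chebyshev.T ℝ (j:ℤ)).eval t * (Real.sqrt (1 - t^2))⁻¹

lemma cheb_integrable (j : ℕ) : IntegrableOn (cw j) (Set.Icc (-1:ℝ) 1) := by
  rw [integrableOn_Icc_iff_integrableOn_Ioo, ← cos_image_Ioo,
    integrableOn_image_iff_integrableOn_abs_deriv_smul measurableSet_Ioo
      (fun x _ => (Real.hasDerivAt_cos x).hasDerivWithinAt)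
      (Real.injOn_cos.mono (by intro x hx; exact ⟨hx.1.le, hx.2.le⟩))]
  have hi : IntegrableOn (fun x => Real.cos (j * x)) (Set.Ioo 0 π) := by
    have : IntegrableOn (fun x => Real.cos (j * x)) (Set.Icc 0 π) :=
      (Real.continuous_cos.comp (continuous_const.mul continuous_id)).integrableOn_Icc
    exact this.mono_set Set.Ioo_subset_Icc_self
  apply hi.congr_fun ?_ measurableSet_Ioo
  intro x hx
  have hs : 0 < Real.sin x := Real.sin_pos_of_pos_of_lt_pi hx.1 hx.2
  have h2 : (1 : ℝ) - Real.cos x ^ 2 = Real.sin x ^ 2 := by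
    have := Real.sin_sq_add_cos_sq x; linarith
  dsimp only
  rw [eq_comm, cw, h2, Real.sqrt_sq hs.le, abs_neg, abs_of_pos hs, Polynomial.Chebyshev.T_real_cos,
    smul_eq_mul]
  push_cast
  field_simp

lemma prod_integral (A B C : ℝ → ℝ) :
    ∫ t in Set.Icc ((-(1:ℝ), -(1:ℝ), -(1:ℝ))) (((1:ℝ), (1:ℝ), (1:ℝ))),
      A t.1 * B t.2.1 * C t.2.2
    = (∫ t in Set.Icc (-1:ℝ) 1, A t) * (∫ t in Set.Icc (-1:ℝ) 1, B t) *
      (∫ t in Set.Icc (-1:ℝ) 1, C t) := by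
  have h : Set.Icc ((-(1:ℝ), -(1:ℝ), -(1:ℝ))) (((1:ℝ), (1:ℝ), (1:ℝ)))
      = Set.Icc (-1:ℝ) 1 ×ˢ (Set.Icc (-1:ℝ) 1 ×ˢ Set.Icc (-1:ℝ) 1) := by
    rw [Set.Icc_prod_eq, Set.Icc_prod_eq]
  rw [h, MeasureTheory.Measure.volume_eq_prod, ← MeasureTheory.Measure.prod_restrict,
    show (volume : Measure (ℝ × ℝ)) = (volume : Measure ℝ).prod volume from
      MeasureTheory.Measure.volume_eq_prod ℝ ℝ, ← MeasureTheory.Measure.prod_restrict]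
  rw [show (fun t : ℝ × ℝ × ℝ => A t.1 * B t.2.1 * C t.2.2)
      = fun t : ℝ × ℝ × ℝ => A t.1 * ((fun p : ℝ × ℝ => B p.1 * C p.2) t.2) from
    funext fun t => by ring]
  rw [MeasureTheory.integral_prod_mul A (fun p : ℝ × ℝ => B p.1 * C p.2),
    MeasureTheory.integral_prod_mul B C, mul_assoc]

end Aux1

noncomputable def SS (n : ℕ) : Finset (ℤ × ℤ × ℤ) :=
  (Finset.Icc ((0 : ℤ), (0 : ℤ), (0 : ℤ)) ((2*n-1 : ℤ), (2*n-1 : ℤ), (2*n-1 : ℤ))).filter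
    fun k => k.1 % 2 = k.2.1 % 2 ∧ k.2.1 % 2 = k.2.2 % 2

def fld (n : ℕ) (k : ℤ) : ℤ := min k (2*n - k)

def Phi (n : ℕ) (k : ℤ × ℤ × ℤ) : ℤ × ℤ × ℤ := (fld n k.1, fld n k.2.1, fld n k.2.2)

noncomputable def Fi (n : ℕ) (m : ℤ) : Finset ℤ :=
  if m = 0 then {0} else if m = (n:ℤ) then {(n:ℤ)} else {m, 2*n - m}

lemma mem_Fi (n : ℕ) (hn : 1 ≤ n) (m : ℤ) (hm0 : 0 ≤ m) (hmn : m ≤ n) (k : ℤ) :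
    k ∈ Fi n m ↔ (0 ≤ k ∧ k ≤ 2*n - 1 ∧ fld n k = m) := by
  unfold Fi fld
  have hn' : (1:ℤ) ≤ n := by exact_mod_cast hn
  split_ifs with h1 h2 <;>
    simp only [Finset.mem_singleton, Finset.mem_insert] <;> omega

lemma maps_to_Phi (n : ℕ) (hn : 1 ≤ n) : ∀ k ∈ SS n, Phi n k ∈ Xi3 n := by
  intro k hk
  simp only [SS, Xi3, Finset.mem_filter, Finset.mem_Icc, Prod.le_def, Phi, fld] at hk ⊢
  have hn' : (1:ℤ) ≤ n := by exact_mod_cast hn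
  omega

lemma fiber_eq (n : ℕ) (hn : 1 ≤ n) (j : ℤ × ℤ × ℤ) (hj : j ∈ Xi3 n) :
    (SS n).filter (fun k => Phi n k = j) = Fi n j.1 ×ˢ Fi n j.2.1 ×ˢ Fi n j.2.2 := by
  simp only [Xi3, Finset.mem_filter, Finset.mem_Icc, Prod.le_def] at hj
  obtain ⟨⟨⟨h10, h20, h30⟩, h1n, h2n, h3n⟩, hp1, hp2⟩ := hj
  ext k
  simp only [SS, Finset.mem_filter, Finset.mem_Icc, Prod.le_def, Finset.mem_product,
    mem_Fi n hn _ h10 h1n, mem_Fi n hn _ h20 h2n, mem_Fi n hn _ h30 h3n, Phi,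
    Prod.ext_iff, fld]
  have hn' : (1:ℤ) ≤ n := by exact_mod_cast hn
  constructor
  · rintro ⟨⟨⟨hk1, hk2⟩, _⟩, he⟩; omega
  · rintro ⟨⟨hk1a, hk1b, hk1c⟩, ⟨hk2a, hk2b, hk2c⟩, hk3a, hk3b, hk3c⟩
    refine ⟨⟨⟨⟨hk1a, hk2a, hk3a⟩, hk1b, hk2b, hk3b⟩, ?_, ?_⟩, hk1c, hk2c, hk3c⟩ <;> omega

lemma card_Fi (n : ℕ) (hn : 1 ≤ n) (m : ℤ) (hm0 : 0 ≤ m) (hmn : m ≤ n) :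
    ((Fi n m).card : ℝ) = if m = 0 ∨ m = (n:ℤ) then 1 else 2 := by
  have hn' : (1:ℤ) ≤ n := by exact_mod_cast hn
  by_cases h1 : m = 0
  · simp [Fi, h1]
  · by_cases h2 : m = (n:ℤ)
    · have h3 : n ≠ 0 := by omega
      simp [Fi, h1, h2, h3]
    · rw [if_neg (by tauto)]
      unfold Fi
      rw [if_neg h1, if_neg h2, Finset.card_insert_of_notMem (by simp; omega)]
      simp

lemma lam_eq (n : ℕ) (hn : 1 ≤ n) (j : ℤ × ℤ × ℤ) (hj : j ∈ Xi3 n) :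
    lam3 n j = ((Fi n j.1).card : ℝ) * (Fi n j.2.1).card * (Fi n j.2.2).card := by
  simp only [Xi3, Finset.mem_filter, Finset.mem_Icc, Prod.le_def] at hj
  obtain ⟨⟨⟨h10, h20, h30⟩, h1n, h2n, h3n⟩, hp1, hp2⟩ := hj
  rw [card_Fi n hn _ h10 h1n, card_Fi n hn _ h20 h2n, card_Fi n hn _ h30 h3n]
  by_cases h1 : j.1 = 0 ∨ j.1 = (n:ℤ) <;> by_cases h2 : j.2.1 = 0 ∨ j.2.1 = (n:ℤ) <;>
    by_cases h3 : j.2.2 = 0 ∨ j.2.2 = (n:ℤ) <;> simp [lam3, h1, h2, h3] <;> norm_num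

lemma fold_sum (n : ℕ) (hn : 1 ≤ n) (F : ℤ × ℤ × ℤ → ℝ)
    (hF : ∀ k ∈ SS n, F (Phi n k) = F k) :
    ∑ k ∈ SS n, F k = ∑ j ∈ Xi3 n, lam3 n j * F j := by
  rw [← Finset.sum_fiberwise_of_maps_to (maps_to_Phi n hn) F]
  refine Finset.sum_congr rfl fun j hj => ?_
  have : ∑ k ∈ (SS n).filter (fun k => Phi n k = j), F k
      = ∑ k ∈ (SS n).filter (fun k => Phi n k = j), F j := by
    refine Finset.sum_congr rfl fun k hk => ?_
    simp only [Finset.mem_filter] at hk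
    rw [← hk.2, hF k hk.1]
  rw [this, Finset.sum_const, fiber_eq n hn j hj, lam_eq n hn j hj, Finset.card_product,
    Finset.card_product, nsmul_eq_mul]
  push_cast
  ring

lemma SS_eq_image (n : ℕ) : SS n = Finset.image
    (fun p : ℕ × ℕ × ℕ × ℕ => ((2*p.2.1+p.1 : ℤ), (2*p.2.2.1+p.1 : ℤ), (2*p.2.2.2+p.1 : ℤ)))
    (Finset.range 2 ×ˢ Finset.range n ×ˢ Finset.range n ×ˢ Finset.range n) := by
  ext k
  simp only [SS, Finset.mem_filter, Finset.mem_Icc, Prod.le_def, Finset.mem_image,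
    Finset.mem_product, Finset.mem_range]
  constructor
  · rintro ⟨⟨⟨hk1, hk2⟩, hk3⟩, hp1, hp2⟩
    refine ⟨⟨(k.1 % 2).toNat, (k.1/2).toNat, (k.2.1/2).toNat, (k.2.2/2).toNat⟩,
      ⟨?_, ?_, ?_, ?_⟩, ?_⟩ <;> simp [Prod.ext_iff] <;> omega
  · rintro ⟨⟨s, a1, a2, a3⟩, ⟨hs, h1, h2, h3⟩, rfl⟩
    dsimp only at hs h1 h2 h3
    simp only [Prod.le_def]
    refine ⟨⟨⟨?_, ?_, ?_⟩, ?_, ?_, ?_⟩, ?_, ?_⟩ <;> omega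

lemma sum_SS (n : ℕ) (F : ℤ × ℤ × ℤ → ℝ) :
    ∑ k ∈ SS n, F k = ∑ s ∈ Finset.range 2, ∑ a1 ∈ Finset.range n, ∑ a2 ∈ Finset.range n,
      ∑ a3 ∈ Finset.range n, F ((2*a1+s : ℤ), (2*a2+s : ℤ), (2*a3+s : ℤ)) := by
  rw [SS_eq_image n, Finset.sum_image (by
    intro x hx y hy h
    simp only [Finset.mem_coe, Finset.mem_product, Finset.mem_range] at hx hy
    simp only [Prod.ext_iff] at h ⊢
    omega)]
  rw [Finset.sum_product, Finset.sum_congr rfl fun s _ => Finset.sum_product _ _ _]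
  refine Finset.sum_congr rfl fun s _ => Finset.sum_congr rfl fun a1 _ => ?_
  rw [Finset.sum_product]

lemma sum_cos_eq_zero (n j : ℕ) (hn : 0 < n) (hj : ¬ (n ∣ j)) (c : ℝ) :
    ∑ a ∈ Finset.range n, Real.cos (c + a * (2*Real.pi*j/n)) = 0 := by
  set β : ℝ := 2*Real.pi*j/n with hβ
  set z : ℂ := Complex.exp (β * Complex.I) with hz
  have hn' : (n:ℝ) ≠ 0 := by positivity
  have hz1 : z ≠ 1 := by
    rw [hz]
    rw [Ne, Complex.exp_eq_one_iff]
    rintro ⟨m, hm⟩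
    have h3 : β = m * (2*Real.pi) := by
      have := congrArg Complex.im hm
      simpa using this
    rw [hβ] at h3
    have h4 : (j : ℝ) = m * n := by
      field_simp at h3
      have hπ : Real.pi ≠ 0 := Real.pi_ne_zero
      nlinarith [Real.pi_pos]
    have h5 : (j : ℤ) = m * n := by exact_mod_cast h4
    exact hj (Int.natCast_dvd_natCast.mp ⟨m, by rw [h5, mul_comm]⟩)
  have hz2 : z ^ n = 1 := by
    rw [hz, ← Complex.exp_nat_mul]
    have : (n : ℂ) * (β * Complex.I) = (j : ℤ) * (2 * Real.pi * Complex.I) := by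
      rw [hβ]
      have hnc : (n:ℂ) ≠ 0 := by exact_mod_cast hn'
      push_cast
      field_simp
    rw [this, Complex.exp_int_mul_two_pi_mul_I]
  have key : ∑ a ∈ Finset.range n, Complex.exp ((c + a * β : ℝ) * Complex.I) = 0 := by
    have : ∀ a : ℕ, Complex.exp ((c + a * β : ℝ) * Complex.I)
        = Complex.exp ((c:ℝ) * Complex.I) * z ^ a := by
      intro a
      rw [hz, ← Complex.exp_nat_mul, ← Complex.exp_add]
      push_cast
      ring_nf
    simp_rw [this]
    rw [← Finset.mul_sum, geom_sum_eq hz1, hz2]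
    simp
  have : ∑ a ∈ Finset.range n, Real.cos (c + a * β)
      = (∑ a ∈ Finset.range n, Complex.exp ((c + a * β : ℝ) * Complex.I)).re := by
    rw [Complex.re_sum]
    exact Finset.sum_congr rfl fun a _ => (Complex.exp_ofReal_mul_I_re _).symm
  rw [this, key, Complex.zero_re]

noncomputable def CS (n j s : ℕ) : ℝ :=
  ∑ a ∈ Finset.range n, Real.cos ((j:ℝ) * ((2*(a:ℝ)+(s:ℝ)) * Real.pi / n))

lemma CS_zero (n s : ℕ) : CS n 0 s = n := by
  simp [CS]

lemma CS_n (n s : ℕ) (hn : 0 < n) : CS n n s = n * Real.cos (s * Real.pi) := by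
  have hn' : (n:ℝ) ≠ 0 := by positivity
  unfold CS
  have : ∀ a ∈ Finset.range n, Real.cos ((n:ℝ) * ((2*(a:ℝ)+(s:ℝ)) * Real.pi / n))
      = Real.cos (s * Real.pi) := by
    intro a _
    have harg : (n:ℝ) * ((2*(a:ℝ)+(s:ℝ)) * Real.pi / n)
        = (s:ℝ) * Real.pi + (a:ℤ) * (2 * Real.pi) := by
      push_cast; field_simp; ring
    rw [harg, Real.cos_add_int_mul_two_pi]
  rw [Finset.sum_congr rfl this, Finset.sum_const, Finset.card_range, nsmul_eq_mul]

lemma CS_not_dvd (n j s : ℕ) (hn : 0 < n) (hj : ¬ (n ∣ j)) : CS n j s = 0 := by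
  have hn' : (n:ℝ) ≠ 0 := by positivity
  unfold CS
  rw [← sum_cos_eq_zero n j hn hj ((j:ℝ) * (s:ℝ) * Real.pi / n)]
  refine Finset.sum_congr rfl fun a _ => ?_
  congr 1
  field_simp
  ring

lemma fld_cos (n : ℕ) (hn : 1 ≤ n) (j : ℕ) (k : ℤ) (h0 : 0 ≤ k) (h1 : k ≤ 2*(n:ℤ)-1) :
    Real.cos ((j:ℝ) * (((fld n k : ℤ) : ℝ) * Real.pi / n)) =
      Real.cos ((j:ℝ) * ((k:ℝ) * Real.pi / n)) := by
  have hn' : (n:ℝ) ≠ 0 := by positivity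
  by_cases hk : k ≤ 2*(n:ℤ) - k
  · rw [fld, min_eq_left hk]
  · rw [fld, min_eq_right (le_of_not_ge hk)]
    have harg : (j:ℝ) * (((2*(n:ℤ) - k : ℤ) : ℝ) * Real.pi / n)
        = (j:ℤ) * (2 * Real.pi) - (j:ℝ) * ((k:ℝ) * Real.pi / n) := by
      push_cast; field_simp
    rw [harg, Real.cos_int_mul_two_pi_sub]

lemma triple_factor (s1 s2 s3 : Finset ℕ) (g1 g2 g3 : ℕ → ℝ) :
    ∑ a1 ∈ s1, ∑ a2 ∈ s2, ∑ a3 ∈ s3, g1 a1 * g2 a2 * g3 a3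
      = (∑ a1 ∈ s1, g1 a1) * ((∑ a2 ∈ s2, g2 a2) * (∑ a3 ∈ s3, g3 a3)) := by
  rw [Finset.sum_mul]
  refine Finset.sum_congr rfl fun a1 _ => ?_
  rw [Finset.sum_mul_sum, Finset.mul_sum]
  refine Finset.sum_congr rfl fun a2 _ => ?_
  rw [Finset.mul_sum]
  exact Finset.sum_congr rfl fun a3 _ => by ring

lemma q_le_one {n q r : ℕ} (hn : 1 ≤ n) (h : n * q + n * r ≤ 2 * n - 1) : q ≤ 1 := by
  by_contra hq
  push_neg at hq
  have h1 : n * 2 ≤ n * q := Nat.mul_le_mul_left n hq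
  have h2 : n * q ≤ 2 * n - 1 := le_trans (Nat.le_add_right _ _) h
  omega

lemma comb_main (n : ℕ) (hn : 1 ≤ n) (j1 j2 j3 : ℕ)
    (h12 : j1 + j2 ≤ 2*n-1) (h13 : j1 + j3 ≤ 2*n-1) (h23 : j2 + j3 ≤ 2*n-1) :
    ∑ k ∈ Xi3 n, lam3 n k *
        (Real.cos ((j1:ℝ) * ((k.1:ℝ) * Real.pi / n)) *
         Real.cos ((j2:ℝ) * ((k.2.1:ℝ) * Real.pi / n)) *
         Real.cos ((j3:ℝ) * ((k.2.2:ℝ) * Real.pi / n)))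
      = if j1 = 0 ∧ j2 = 0 ∧ j3 = 0 then 2*(n:ℝ)^3 else 0 := by
  have hn' : (1:ℤ) ≤ n := by exact_mod_cast hn
  set F : ℤ × ℤ × ℤ → ℝ := fun k =>
    Real.cos ((j1:ℝ) * ((k.1:ℝ) * Real.pi / n)) *
         Real.cos ((j2:ℝ) * ((k.2.1:ℝ) * Real.pi / n)) *
         Real.cos ((j3:ℝ) * ((k.2.2:ℝ) * Real.pi / n)) with hF
  have hinv : ∀ k ∈ SS n, F (Phi n k) = F k := by
    intro k hk
    simp only [SS, Finset.mem_filter, Finset.mem_Icc, Prod.le_def] at hk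
    obtain ⟨⟨⟨ha1, ha2, ha3⟩, hb1, hb2, hb3⟩, _⟩ := hk
    simp only [hF, Phi]
    rw [fld_cos n hn j1 k.1 ha1 hb1, fld_cos n hn j2 k.2.1 ha2 hb2,
      fld_cos n hn j3 k.2.2 ha3 hb3]
  have key : (∑ k ∈ Xi3 n, lam3 n k * F k)
      = ∑ s ∈ Finset.range 2, CS n j1 s * CS n j2 s * CS n j3 s := by
    rw [← fold_sum n hn F hinv, sum_SS n F]
    refine Finset.sum_congr rfl fun s _ => ?_
    unfold CS
    rw [mul_assoc, ← triple_factor]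
    simp only [hF]
    refine Finset.sum_congr rfl fun a1 _ => Finset.sum_congr rfl fun a2 _ =>
      Finset.sum_congr rfl fun a3 _ => ?_
    push_cast
    ring_nf
  rw [key]
  by_cases hz : j1 = 0 ∧ j2 = 0 ∧ j3 = 0
  · obtain ⟨rfl, rfl, rfl⟩ := hz
    rw [if_pos ⟨rfl, rfl, rfl⟩]
    simp [CS_zero]
    ring
  · rw [if_neg hz]
    by_cases hd : (n ∣ j1) ∧ (n ∣ j2) ∧ (n ∣ j3)
    · -- all divisible: each in {0, n}, exactly one equals n
      obtain ⟨⟨q1, rfl⟩, ⟨q2, rfl⟩, ⟨q3, rfl⟩⟩ := hd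
      have hq1 : q1 ≤ 1 := q_le_one hn h12
      have hq2 : q2 ≤ 1 := q_le_one hn h23
      have h31 : n * q3 + n * q1 ≤ 2 * n - 1 := by rw [Nat.add_comm]; exact h13
      have hq3 : q3 ≤ 1 := q_le_one hn h31
      have hq1' : q1 = 0 ∨ q1 = 1 := by omega
      have hq2' : q2 = 0 ∨ q2 = 1 := by omega
      have hq3' : q3 = 0 ∨ q3 = 1 := by omega
      have hone : ¬ (q1 = 1 ∧ q2 = 1) ∧ ¬ (q1 = 1 ∧ q3 = 1) ∧ ¬ (q2 = 1 ∧ q3 = 1) := by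
        refine ⟨?_, ?_, ?_⟩ <;> rintro ⟨rfl, rfl⟩ <;> omega
      rcases hq1' with rfl | rfl <;> rcases hq2' with rfl | rfl <;> rcases hq3' with rfl | rfl <;>
        simp_all [CS_zero, CS_n n _ (by omega : 0 < n), Finset.sum_range_succ,
          Real.cos_pi] <;> ring
    · have h0n : 0 < n := by omega
      refine Finset.sum_eq_zero fun s _ => ?_
      by_cases hd1 : n ∣ j1
      · by_cases hd2 : n ∣ j2
        · have hd3 : ¬ n ∣ j3 := fun h => hd ⟨hd1, hd2, h⟩
          rw [CS_not_dvd n j3 s h0n hd3, mul_zero]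
        · rw [CS_not_dvd n j2 s h0n hd2, mul_zero, zero_mul]
      · rw [CS_not_dvd n j1 s h0n hd1, zero_mul, zero_mul]


theorem cubature_first_kind_3d (n : ℕ) (hn : 2 ≤ n)
    (f : ℝ × ℝ × ℝ → ℝ) (hf : f ∈ Submodule.span ℝ (chebProducts (2 * n - 1))) :
    (1 / Real.pi ^ 3) *
        ∫ t in Set.Icc ((-(1:ℝ), -(1:ℝ), -(1:ℝ))) (((1:ℝ), (1:ℝ), (1:ℝ))),
          f t * ((Real.sqrt (1 - t.1 ^ 2))⁻¹ * (Real.sqrt (1 - t.2.1 ^ 2))⁻¹ *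
            (Real.sqrt (1 - t.2.2 ^ 2))⁻¹)
      = (1 / (2 * (n : ℝ) ^ 3)) *
          ∑ k ∈ Xi3 n, lam3 n k *
            f (Real.cos (k.1 * Real.pi / n), Real.cos (k.2.1 * Real.pi / n),
               Real.cos (k.2.2 * Real.pi / n)) := by
  have hn1 : 1 ≤ n := by omega
  have hπ : Real.pi ≠ 0 := Real.pi_ne_zero
  have hnR : (n:ℝ) ≠ 0 := by positivity
  set W : ℝ × ℝ × ℝ → ℝ := fun t => (Real.sqrt (1 - t.1 ^ 2))⁻¹ *
    (Real.sqrt (1 - t.2.1 ^ 2))⁻¹ * (Real.sqrt (1 - t.2.2 ^ 2))⁻¹ with hW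
  suffices h : IntegrableOn (fun t => f t * W t)
      (Set.Icc ((-(1:ℝ), -(1:ℝ), -(1:ℝ))) (((1:ℝ), (1:ℝ), (1:ℝ)))) volume ∧
      (1 / Real.pi ^ 3) *
        (∫ t in Set.Icc ((-(1:ℝ), -(1:ℝ), -(1:ℝ))) (((1:ℝ), (1:ℝ), (1:ℝ))), f t * W t)
      = (1 / (2 * (n : ℝ) ^ 3)) *
          ∑ k ∈ Xi3 n, lam3 n k *
            f (Real.cos (k.1 * Real.pi / n), Real.cos (k.2.1 * Real.pi / n),
               Real.cos (k.2.2 * Real.pi / n)) by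
    exact h.2
  induction hf using Submodule.span_induction with
  | mem g hg =>
    obtain ⟨⟨j1, j2, j3⟩, h12, h13, h23, rfl⟩ := hg
    have hrw : ∀ t : ℝ × ℝ × ℝ,
        ((Polynomial.Chebyshev.T ℝ (j1:ℤ)).eval t.1 *
          (Polynomial.Chebyshev.T ℝ (j2:ℤ)).eval t.2.1 *
          (Polynomial.Chebyshev.T ℝ (j3:ℤ)).eval t.2.2) * W t
        = cw j1 t.1 * cw j2 t.2.1 * cw j3 t.2.2 := by
      intro t; simp only [hW, cw]; ring
    constructor
    · have hset : Set.Icc ((-(1:ℝ), -(1:ℝ), -(1:ℝ))) (((1:ℝ), (1:ℝ), (1:ℝ)))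
          = Set.Icc (-1:ℝ) 1 ×ˢ (Set.Icc (-1:ℝ) 1 ×ˢ Set.Icc (-1:ℝ) 1) := by
        rw [Set.Icc_prod_eq, Set.Icc_prod_eq]
      show Integrable _ _
      rw [hset, MeasureTheory.Measure.volume_eq_prod, ← MeasureTheory.Measure.prod_restrict,
        show (volume : Measure (ℝ × ℝ)) = (volume : Measure ℝ).prod volume from
          MeasureTheory.Measure.volume_eq_prod ℝ ℝ, ← MeasureTheory.Measure.prod_restrict]
      have hint : Integrable (fun z : ℝ × ℝ × ℝ => cw j1 z.1 *
          ((fun w : ℝ × ℝ => cw j2 w.1 * cw j3 w.2) z.2))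
          ((volume.restrict (Set.Icc (-1:ℝ) 1)).prod
            ((volume.restrict (Set.Icc (-1:ℝ) 1)).prod (volume.restrict (Set.Icc (-1:ℝ) 1)))) :=
        (cheb_integrable j1).mul_prod ((cheb_integrable j2).mul_prod (cheb_integrable j3))
      apply hint.congr
      filter_upwards with t
      simp only [cw]
      ring
    · have hL : (∫ t in Set.Icc ((-(1:ℝ), -(1:ℝ), -(1:ℝ))) (((1:ℝ), (1:ℝ), (1:ℝ))),
          ((Polynomial.Chebyshev.T ℝ (j1:ℤ)).eval t.1 *
            (Polynomial.Chebyshev.T ℝ (j2:ℤ)).eval t.2.1 *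
            (Polynomial.Chebyshev.T ℝ (j3:ℤ)).eval t.2.2) * W t)
          = (if j1 = 0 then Real.pi else 0) * (if j2 = 0 then Real.pi else 0) *
            (if j3 = 0 then Real.pi else 0) := by
        simp only [hrw]
        rw [prod_integral (cw j1) (cw j2) (cw j3)]
        unfold cw
        rw [cheb_int j1, cheb_int j2, cheb_int j3]
      simp only []
      rw [hL]
      have hR : ∑ k ∈ Xi3 n, lam3 n k *
          ((Polynomial.Chebyshev.T ℝ (j1:ℤ)).eval (Real.cos (k.1 * Real.pi / n)) *
           (Polynomial.Chebyshev.T ℝ (j2:ℤ)).eval (Real.cos (k.2.1 * Real.pi / n)) *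
           (Polynomial.Chebyshev.T ℝ (j3:ℤ)).eval (Real.cos (k.2.2 * Real.pi / n)))
          = if j1 = 0 ∧ j2 = 0 ∧ j3 = 0 then 2*(n:ℝ)^3 else 0 := by
        rw [← comb_main n hn1 j1 j2 j3 h12 h13 h23]
        refine Finset.sum_congr rfl fun k _ => ?_
        rw [Polynomial.Chebyshev.T_real_cos, Polynomial.Chebyshev.T_real_cos,
          Polynomial.Chebyshev.T_real_cos]
        push_cast
        ring_nf
      rw [hR]
      by_cases e1 : j1 = 0 <;> by_cases e2 : j2 = 0 <;> by_cases e3 : j3 = 0 <;>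
        simp [e1, e2, e3] <;> field_simp <;> ring
  | zero =>
    constructor
    · simp only [Pi.zero_apply, zero_mul]
      exact integrableOn_zero
    · simp
  | add x y hx hy px py =>
    obtain ⟨ix, ex⟩ := px
    obtain ⟨iy, ey⟩ := py
    have hfun : ∀ t : ℝ × ℝ × ℝ, (x + y) t * W t = x t * W t + y t * W t := by
      intro t; simp [Pi.add_apply]; ring
    constructor
    · exact (ix.add iy).congr (Filter.Eventually.of_forall fun t => (hfun t).symm)
    · have hL : (∫ t in Set.Icc ((-(1:ℝ), -(1:ℝ), -(1:ℝ))) (((1:ℝ), (1:ℝ), (1:ℝ))),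
          (x + y) t * W t)
          = (∫ t in Set.Icc ((-(1:ℝ), -(1:ℝ), -(1:ℝ))) (((1:ℝ), (1:ℝ), (1:ℝ))), x t * W t)
          + ∫ t in Set.Icc ((-(1:ℝ), -(1:ℝ), -(1:ℝ))) (((1:ℝ), (1:ℝ), (1:ℝ))), y t * W t := by
        simp only [hfun]
        exact MeasureTheory.integral_add ix iy
      rw [hL]
      have hS : ∑ k ∈ Xi3 n, lam3 n k *
          (x + y) (Real.cos (k.1 * Real.pi / n), Real.cos (k.2.1 * Real.pi / n),
            Real.cos (k.2.2 * Real.pi / n))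
          = (∑ k ∈ Xi3 n, lam3 n k *
              x (Real.cos (k.1 * Real.pi / n), Real.cos (k.2.1 * Real.pi / n),
                Real.cos (k.2.2 * Real.pi / n)))
          + ∑ k ∈ Xi3 n, lam3 n k *
              y (Real.cos (k.1 * Real.pi / n), Real.cos (k.2.1 * Real.pi / n),
                Real.cos (k.2.2 * Real.pi / n)) := by
        rw [← Finset.sum_add_distrib]
        exact Finset.sum_congr rfl fun k _ => by simp [Pi.add_apply]; ring
      rw [hS]
      rw [mul_add, mul_add, ex, ey]
  | smul a x hx px =>
    obtain ⟨ix, ex⟩ := px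
    have hfun : ∀ t : ℝ × ℝ × ℝ, (a • x) t * W t = a * (x t * W t) := by
      intro t; simp [Pi.smul_apply, smul_eq_mul]; ring
    constructor
    · exact (ix.const_mul a).congr (Filter.Eventually.of_forall fun t => (hfun t).symm)
    · have hL : (∫ t in Set.Icc ((-(1:ℝ), -(1:ℝ), -(1:ℝ))) (((1:ℝ), (1:ℝ), (1:ℝ))),
          (a • x) t * W t)
          = a * ∫ t in Set.Icc ((-(1:ℝ), -(1:ℝ), -(1:ℝ))) (((1:ℝ), (1:ℝ), (1:ℝ))), x t * W t := by
        simp only [hfun]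
        exact MeasureTheory.integral_const_mul a _
      rw [hL]
      have hS : ∑ k ∈ Xi3 n, lam3 n k *
          (a • x) (Real.cos (k.1 * Real.pi / n), Real.cos (k.2.1 * Real.pi / n),
            Real.cos (k.2.2 * Real.pi / n))
          = a * ∑ k ∈ Xi3 n, lam3 n k *
              x (Real.cos (k.1 * Real.pi / n), Real.cos (k.2.1 * Real.pi / n),
                Real.cos (k.2.2 * Real.pi / n)) := by
        rw [Finset.mul_sum]
        exact Finset.sum_congr rfl fun k _ => by simp [Pi.smul_apply, smul_eq_mul]; ring
      rw [hS]
      rw [← mul_assoc, mul_comm _ a, mul_assoc, ex, ← mul_assoc, mul_comm a, mul_assoc]
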